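/- Let V : ℝ≥0 → ℝ be continuously differentiable, nonnegative, with V' (t) ≤ −c·√(V t) for a constant c > 0 wherever V t > 0. Then V reaches zero in finite time: there exists t₀ ≤ 2√(V 0)/c such that V t₀ = 0, and V t = 0 for all t ≥ t₀ (assuming V remains nonincreasing). -/

import Mathlib

/-- Finite-time convergence: if V is C¹, nonnegative and nonincreasing on [0, ∞),
and V'(t) ≤ −c√(V t) wherever V t > 0, then V reaches zero no later than
t₀ = 2√(V 0)/c and stays at zero. -/
theorem finite_time_convergence (V : ℝ → ℝ) (c : ℝ) (hc : 0 < c)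
    (hV1 : ContDiff ℝ 1 V)
    (hVnonneg : ∀ t, 0 ≤ t → 0 ≤ V t)
    (hVdec : AntitoneOn V (Set.Ici (0 : ℝ)))
    (hVdiff : ∀ t, 0 ≤ t → 0 < V t → deriv V t ≤ -c * Real.sqrt (V t)) :
    ∃ t₀ : ℝ, 0 ≤ t₀ ∧ t₀ ≤ 2 * Real.sqrt (V 0) / c ∧ V t₀ = 0 ∧
      ∀ t, t₀ ≤ t → V t = 0 := by
  set T : ℝ := 2 * Real.sqrt (V 0) / c with hT
  have hV0 : 0 ≤ V 0 := hVnonneg 0 le_rfl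
  have hsqrt0 : 0 ≤ Real.sqrt (V 0) := Real.sqrt_nonneg _
  have hTnonneg : 0 ≤ T := by positivity
  have hVdiffble : Differentiable ℝ V := hV1.differentiable one_ne_zero
  have hVT : V T = 0 := by
    by_contra h
    have hpos : 0 < V T := lt_of_le_of_ne (hVnonneg T hTnonneg) (Ne.symm h)
    have hposOn : ∀ t ∈ Set.Icc (0:ℝ) T, 0 < V t := by
      intro t ht
      exact lt_of_lt_of_le hpos (hVdec ht.1 hTnonneg ht.2)
    set g : ℝ → ℝ := fun t => Real.sqrt (V t) + (c/2) * t with hg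
    have hderiv : ∀ t ∈ interior (Set.Icc (0:ℝ) T),
        HasDerivAt g (1 / (2 * Real.sqrt (V t)) * deriv V t + c/2 * 1) t := by
      intro t ht
      rw [interior_Icc] at ht
      have hVt : 0 < V t := hposOn t ⟨le_of_lt ht.1, le_of_lt ht.2⟩
      have h1 : HasDerivAt V (deriv V t) t := (hVdiffble t).hasDerivAt
      have h2 : HasDerivAt (fun t => Real.sqrt (V t))
          (1 / (2 * Real.sqrt (V t)) * deriv V t) t :=
        (Real.hasDerivAt_sqrt (ne_of_gt hVt)).comp t h1
      exact h2.add ((hasDerivAt_id t).const_mul (c/2))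
    have hanti : AntitoneOn g (Set.Icc (0:ℝ) T) := by
      apply antitoneOn_of_deriv_nonpos (convex_Icc 0 T)
      · apply ContinuousOn.add
        · exact (hVdiffble.continuous.sqrt).continuousOn
        · exact (continuous_const.mul continuous_id).continuousOn
      · intro t ht
        exact (hderiv t ht).differentiableAt.differentiableWithinAt
      · intro t ht
        rw [(hderiv t ht).deriv]
        rw [interior_Icc] at ht
        have hVt : 0 < V t := hposOn t ⟨le_of_lt ht.1, le_of_lt ht.2⟩
        have hs : 0 < Real.sqrt (V t) := Real.sqrt_pos.mpr hVt
        have hd : deriv V t ≤ -c * Real.sqrt (V t) :=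
          hVdiff t (le_of_lt ht.1) hVt
        have : 1 / (2 * Real.sqrt (V t)) * deriv V t ≤
            1 / (2 * Real.sqrt (V t)) * (-c * Real.sqrt (V t)) := by
          apply mul_le_mul_of_nonneg_left hd (by positivity)
        have heq : 1 / (2 * Real.sqrt (V t)) * (-c * Real.sqrt (V t)) = -(c/2) := by
          field_simp
        nlinarith
    have hle : g T ≤ g 0 :=
      hanti (Set.left_mem_Icc.mpr hTnonneg) (Set.right_mem_Icc.mpr hTnonneg) hTnonneg
    have hcT : c/2 * T = Real.sqrt (V 0) := by
      field_simp [hT]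
      rw [hT]
      field_simp
    have hsT : 0 < Real.sqrt (V T) := Real.sqrt_pos.mpr hpos
    simp only [hg] at hle
    rw [hcT] at hle
    simp at hle
    linarith
  refine ⟨T, hTnonneg, le_rfl, hVT, fun t ht => ?_⟩
  have h1 : V t ≤ V T := hVdec hTnonneg (le_trans hTnonneg ht) ht
  have h2 : 0 ≤ V t := hVnonneg t (le_trans hTnonneg ht)
  linarith [hVT ▸ h1]
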